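/- Let n ∈ ℕ, κ ∈ ℝ, and define U_vol : Matrix (Fin n) (Fin n) ℝ → ℝ by U_vol(A) = (κ/2)·[ (det A − 1)/2 − (1/2)·log(det A) ], and the dilative energy U⁺_mat(A) = U_vol(A) if det A ≥ 1 and U⁺_mat(A) = 0 otherwise. Then at every matrix C with det C > 0 — including matrices with det C = 1 — U⁺_mat is Fréchet differentiable with derivative H ↦ (κ/4)·max(det C − 1, 0)·trace(C⁻¹·H). Equivalently, the dilative stress satisfies S⁺(C) = 2·∂U⁺/∂C = H(det C − 1)·S_∘(C), where H is the Heaviside function and S_∘(C) = (κ/2)·(det C − 1)·C⁻¹. -/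

import Mathlib

open Matrix

set_option maxHeartbeats 1000000

attribute [local instance] Matrix.normedAddCommGroup Matrix.normedSpace

/-- The determinant, bundled as a continuous multilinear map in the rows. -/
noncomputable def detCML (n : ℕ) : ContinuousMultilinearMap ℝ (fun _ : Fin n => (Fin n → ℝ)) ℝ :=
  MultilinearMap.mkContinuous (Matrix.detRowAlternating).toMultilinearMap (Nat.factorial n) (by
    intro m
    have h1 : (Matrix.detRowAlternating (R := ℝ) (n := Fin n)).toMultilinearMap m
        = Matrix.det (Matrix.of m) := rfl
    rw [h1, Matrix.det_apply]
    calc ‖∑ σ : Equiv.Perm (Fin n), Equiv.Perm.sign σ • ∏ i, Matrix.of m (σ i) i‖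
        ≤ ∑ σ : Equiv.Perm (Fin n), ‖Equiv.Perm.sign σ • ∏ i, Matrix.of m (σ i) i‖ :=
          norm_sum_le _ _
      _ ≤ ∑ σ : Equiv.Perm (Fin n), ∏ i, ‖m i‖ := by
          apply Finset.sum_le_sum
          intro σ _
          rw [Units.smul_def, zsmul_eq_mul, norm_mul]
          have hs : ‖((Equiv.Perm.sign σ : ℤ) : ℝ)‖ = 1 := by
            rcases Int.units_eq_one_or (Equiv.Perm.sign σ) with h | h <;> simp [h]
          rw [hs, one_mul]
          calc ‖∏ i, Matrix.of m (σ i) i‖ ≤ ∏ i, ‖Matrix.of m (σ i) i‖ := by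
                rw [Real.norm_eq_abs, Finset.abs_prod]
                exact le_of_eq (by simp [Real.norm_eq_abs])
            _ ≤ ∏ i, ‖m (σ i)‖ := by
                apply Finset.prod_le_prod (fun _ _ => norm_nonneg _)
                intro i _
                exact norm_le_pi_norm (m (σ i)) i
            _ = ∏ i, ‖m i‖ := Equiv.prod_comp σ (fun i => ‖m i‖)
      _ = (Nat.factorial n) * ∏ i, ‖m i‖ := by
          rw [Finset.sum_const, Finset.card_univ, Fintype.card_perm, Fintype.card_fin,
            nsmul_eq_mul]
    )

theorem det_updateRow_eq (n : ℕ) (C H : Matrix (Fin n) (Fin n) ℝ) (j : Fin n) :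
    (C.updateRow j (H j)).det = ∑ i, H j i * C.adjugate i j := by
  have h1 : H j = ∑ i, H j i • (Pi.single i 1 : Fin n → ℝ) := by
    ext k; simp [Pi.single_apply]
  have h2 : ∀ v : Fin n → ℝ, (C.updateRow j v).det
      = (Matrix.detRowAlternating (R := ℝ)).toMultilinearMap (Function.update C j v) :=
    fun _ => rfl
  calc (C.updateRow j (H j)).det
      = (Matrix.detRowAlternating (R := ℝ)).toMultilinearMap
          (Function.update C j (∑ i, H j i • (Pi.single i 1 : Fin n → ℝ))) := by
        rw [← h1]; exact h2 _
    _ = ∑ i, H j i * C.adjugate i j := by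
        erw [MultilinearMap.map_update_sum]
        refine Finset.sum_congr rfl fun i _ => ?_
        erw [MultilinearMap.map_update_smul]; rw [ smul_eq_mul, Matrix.adjugate_apply, h2]

theorem sum_det_updateRow (n : ℕ) (C H : Matrix (Fin n) (Fin n) ℝ) :
    (∑ j, (C.updateRow j (H j)).det) = Matrix.trace (C.adjugate * H) := by
  rw [Matrix.trace]
  simp only [Matrix.diag, Matrix.mul_apply, det_updateRow_eq]
  rw [Finset.sum_comm]
  refine Finset.sum_congr rfl fun j _ => ?_
  refine Finset.sum_congr rfl fun i _ => ?_
  ring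

theorem hasFDerivAt_matrix_det (n : ℕ) (C : Matrix (Fin n) (Fin n) ℝ) :
    HasFDerivAt Matrix.det ((detCML n).linearDeriv C) C := by
  have := (detCML n).hasFDerivAt (x := C)
  exact this

theorem phi_hasDerivAt (κ : ℝ) {x : ℝ} (hx : 0 < x) :
    HasDerivAt (fun y : ℝ => if 1 ≤ y then (κ / 2) * ((y - 1) / 2 - (1 / 2) * Real.log y) else 0)
      ((κ / 4) * max (x - 1) 0 / x) x := by
  rcases lt_trichotomy x 1 with h | h | h
  · -- x < 1 : locally zero
    have hmax : max (x - 1) 0 = 0 := max_eq_right (by linarith)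
    rw [hmax]
    simp only [mul_zero, zero_div]
    have hev : (fun y : ℝ => if 1 ≤ y then (κ / 2) * ((y - 1) / 2 - (1 / 2) * Real.log y) else 0)
        =ᶠ[nhds x] (fun _ => (0 : ℝ)) := by
      filter_upwards [Iio_mem_nhds h] with y hy
      rw [if_neg (not_le.2 hy)]
    exact (hasDerivAt_const x 0).congr_of_eventuallyEq hev
  · -- x = 1
    subst h
    have hmax : max (1 - 1 : ℝ) 0 = 0 := by norm_num
    rw [hmax]
    simp only [mul_zero, zero_div]
    rw [hasDerivAt_iff_isLittleO]
    have hb : (fun y : ℝ => (if 1 ≤ y then (κ / 2) * ((y - 1) / 2 - (1 / 2) * Real.log y) else 0))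
        =O[nhds 1] (fun y => (y - 1) ^ 2) := by
      rw [Asymptotics.isBigO_iff]
      refine ⟨|κ| / 2, ?_⟩
      filter_upwards [Ioi_mem_nhds (by norm_num : (1:ℝ)/2 < 1)] with y hy
      by_cases hy1 : 1 ≤ y
      · rw [if_pos hy1]
        have hy0 : 0 < y := by linarith [hy]
        have e1 : (κ / 2) * ((y - 1) / 2 - (1 / 2) * Real.log y)
            = (κ / 4) * ((y - 1) - Real.log y) := by ring
        have h2 : Real.log y ≤ y - 1 := Real.log_le_sub_one_of_pos hy0
        have h3 : (y - 1) / y ≤ Real.log y := by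
          have := Real.log_le_sub_one_of_pos (inv_pos.2 hy0)
          rw [Real.log_inv] at this
          have : 1 - y⁻¹ ≤ Real.log y := by linarith
          calc (y - 1) / y = 1 - y⁻¹ := by field_simp
            _ ≤ Real.log y := this
        have h4 : 0 ≤ (y - 1) - Real.log y := by linarith
        have h5 : (y - 1) - Real.log y ≤ 2 * (y - 1) ^ 2 := by
          have : (y - 1) - (y - 1) / y = (y - 1) ^ 2 / y := by field_simp
          have h6 : (y - 1) - Real.log y ≤ (y - 1) ^ 2 / y := by linarith
          have h7 : (y - 1) ^ 2 / y ≤ 2 * (y - 1) ^ 2 := by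
            rw [div_le_iff₀ hy0]
            nlinarith [sq_nonneg (y - 1), hy]
          linarith
        rw [e1, Real.norm_eq_abs, Real.norm_eq_abs, abs_mul, abs_of_nonneg h4]
        calc |κ / 4| * ((y - 1) - Real.log y) ≤ |κ / 4| * (2 * (y - 1) ^ 2) := by
              exact mul_le_mul_of_nonneg_left h5 (abs_nonneg _)
          _ = |κ| / 2 * (y - 1) ^ 2 := by rw [abs_div]; norm_num; ring
          _ ≤ |κ| / 2 * |(y - 1) ^ 2| := by
              exact mul_le_mul_of_nonneg_left (le_abs_self _) (by positivity)
      · rw [if_neg hy1]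
        simp
        positivity
    have hl : (fun y : ℝ => (y - 1) ^ 2) =o[nhds 1] (fun y => y - 1) := by
      have h1 : (fun y : ℝ => y - 1) =o[nhds 1] (fun _ => (1 : ℝ)) := by
        rw [Asymptotics.isLittleO_one_iff]
        have : ContinuousAt (fun y : ℝ => y - 1) 1 := by fun_prop
        simpa using this.tendsto
      have := h1.mul_isBigO (Asymptotics.isBigO_refl (fun y : ℝ => y - 1) (nhds 1))
      simpa [pow_two] using this
    simpa [Real.log_one] using hb.trans_isLittleO hl
  · -- 1 < x
    have hmax : max (x - 1) 0 = x - 1 := max_eq_left (by linarith)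
    rw [hmax]
    have hg : HasDerivAt (fun y : ℝ => (κ / 2) * ((y - 1) / 2 - (1 / 2) * Real.log y))
        ((κ / 2) * (1 / 2 - (1 / 2) * x⁻¹)) x := by
      have hlog : HasDerivAt Real.log x⁻¹ x := Real.hasDerivAt_log (by linarith)
      have h1 : HasDerivAt (fun y : ℝ => (y - 1) / 2 - (1 / 2) * Real.log y)
          (1 / 2 - (1 / 2) * x⁻¹) x := by
        have := ((hasDerivAt_id x).sub_const 1).div_const 2
        exact this.sub (hlog.const_mul (1 / 2))
      exact h1.const_mul (κ / 2)
    have hev : (fun y : ℝ => if 1 ≤ y then (κ / 2) * ((y - 1) / 2 - (1 / 2) * Real.log y) else 0)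
        =ᶠ[nhds x] (fun y => (κ / 2) * ((y - 1) / 2 - (1 / 2) * Real.log y)) := by
      filter_upwards [Ioi_mem_nhds h] with y hy
      rw [if_pos (le_of_lt hy)]
    have hx0 : x ≠ 0 := ne_of_gt hx
    have heq : (κ / 2) * (1 / 2 - (1 / 2) * x⁻¹) = (κ / 4) * (x - 1) / x := by
      rw [eq_div_iff hx0]
      field_simp
      ring
    rw [← heq]
    exact hg.congr_of_eventuallyEq hev

/-- The dilative energy `U⁺(C) = H(det C - 1) · U_vol(C)`, with
`U_vol(C) = (κ/2)[(det C - 1)/2 - (1/2) log det C]`, is Fréchet differentiable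
at every `C` with `det C > 0` — including matrices with `det C = 1` — with
derivative `H ↦ (κ/4) max(det C - 1, 0) trace(C⁻¹ H)`; equivalently, the
dilative stress satisfies `S⁺(C) = H(det C - 1) S_∘(C)` with
`S_∘(C) = (κ/2)(det C - 1) C⁻¹`. -/
theorem dilative_energy_fderiv (n : ℕ) (κ : ℝ) (C : Matrix (Fin n) (Fin n) ℝ)
    (hC : 0 < C.det) :
    HasFDerivAt (fun A : Matrix (Fin n) (Fin n) ℝ =>
        if 1 ≤ A.det then (κ / 2) * ((A.det - 1) / 2 - (1 / 2) * Real.log A.det) else 0)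
      (LinearMap.toContinuousLinearMap
        (((κ / 4) * max (C.det - 1) 0) •
          ((Matrix.traceLinearMap (Fin n) ℝ ℝ).comp (LinearMap.mulLeft ℝ C⁻¹)))) C ∧
    ∀ H : Matrix (Fin n) (Fin n) ℝ,
      (κ / 4) * max (C.det - 1) 0 * Matrix.trace (C⁻¹ * H) =
        (1 / 2) * Matrix.trace
          (((if 0 ≤ C.det - 1 then (1 : ℝ) else 0) •
            (((κ / 2) * (C.det - 1)) • C⁻¹)) * H) := by
  have hx0 : C.det ≠ 0 := ne_of_gt hC
  have hadj : C.adjugate = C.det • C⁻¹ := by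
    rw [Matrix.inv_def, Ring.inverse_eq_inv', smul_smul, mul_inv_cancel₀ hx0, one_smul]
  constructor
  · have hdet := hasFDerivAt_matrix_det n C
    have hphi := phi_hasDerivAt κ hC
    have hcomp := hphi.comp_hasFDerivAt C hdet
    have hEq : ((κ / 4) * max (C.det - 1) 0 / C.det) • ((detCML n).linearDeriv C)
        = LinearMap.toContinuousLinearMap
          (((κ / 4) * max (C.det - 1) 0) •
            ((Matrix.traceLinearMap (Fin n) ℝ ℝ).comp (LinearMap.mulLeft ℝ C⁻¹))) := by
      refine ContinuousLinearMap.ext fun (H : Matrix (Fin n) (Fin n) ℝ) => ?_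
      have hL : ((detCML n).linearDeriv C) H = ∑ j, (C.updateRow j (H j)).det := by
        erw [ContinuousMultilinearMap.linearDeriv_apply]
        rfl
      erw [ContinuousLinearMap.smul_apply]; rw [hL, sum_det_updateRow, hadj, Matrix.smul_mul,
        Matrix.trace_smul]
      have hrhs : (LinearMap.toContinuousLinearMap
          (((κ / 4) * max (C.det - 1) 0) •
            ((Matrix.traceLinearMap (Fin n) ℝ ℝ).comp (LinearMap.mulLeft ℝ C⁻¹)))) H
          = ((κ / 4) * max (C.det - 1) 0) *
            Matrix.trace (C⁻¹ * (show Matrix (Fin n) (Fin n) ℝ from H)) := rfl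
      refine Eq.trans ?_ hrhs.symm
      simp only [smul_eq_mul]
      field_simp
    rw [← hEq]
    exact hcomp
  · intro H
    by_cases h : 0 ≤ C.det - 1
    · rw [if_pos h, one_smul, max_eq_left h, Matrix.smul_mul, Matrix.trace_smul, smul_eq_mul]
      ring
    · rw [if_neg h, zero_smul, Matrix.zero_mul, Matrix.trace_zero, mul_zero,
        max_eq_right (le_of_not_ge h), mul_zero, zero_mul]
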